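/- arXiv:1511.07598 — 2 statements merged into one kernel-verified Lean document; each statement's English description precedes it below -/
import Mathlib

section
/- Let n ∈ ℕ and p ∈ (1, ∞). If there exists a positive constant C such that ‖S(f, Δf/(2n+4))‖_{L^p(ℝⁿ)} ≤ C‖Δf‖_{L^p(ℝⁿ)} for every Schwartz function f on ℝⁿ, then p ≥ 2n/(n+4). In particular, for n ≥ 4 and p ∈ (1, 2n/(4+n)), the characterization of W^{2,p}(ℝⁿ) by the area function S(f,g) fails. -/
open MeasureTheory Metric Complex
open scoped ENNReal FourierTransform RealInnerProductSpace

noncomputable section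

/-- The average of `f` over the ball of center `x` and radius `t`:
`B_t f(x) = ⨍_{B(x,t)} f(y) dy`. -/
def ballAvg {n : ℕ} (f : EuclideanSpace ℝ (Fin n) → ℂ) (t : ℝ)
    (x : EuclideanSpace ℝ (Fin n)) : ℂ :=
  ⨍ y in Metric.ball x t, f y

/-- The `L^p`-type norm `(∫ (F x)^p dμ)^{1/p}` of an `ℝ≥0∞`-valued function. -/
def lpNormE {α : Type*} [MeasurableSpace α] (F : α → ℝ≥0∞) (p : ℝ) (μ : Measure α) : ℝ≥0∞ :=
  (∫⁻ x, F x ^ p ∂μ) ^ (1 / p)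

/-- The second order Lusin area function
`S(f,g)(x) = (∫₀^∞ ∫_{B(x,t)} |(B_t f(y) − f(y))/t² − B_t g(y)|² dy dt/t^{n+1})^{1/2}`. -/
def lusinS2 (n : ℕ) (f g : EuclideanSpace ℝ (Fin n) → ℂ)
    (x : EuclideanSpace ℝ (Fin n)) : ℝ≥0∞ :=
  (∫⁻ t in Set.Ioi (0 : ℝ),
      (∫⁻ y in Metric.ball x t,
        (‖(ballAvg f t y - f y) / (t : ℂ) ^ 2 - ballAvg g t y‖₊ : ℝ≥0∞) ^ 2)
        / ENNReal.ofReal (t ^ (n + 1))) ^ (1 / 2 : ℝ)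

/-- The fractional Lusin area function
`S_α(f)(x) = (∫₀^∞ ∫_{B(x,t)} |(B_t f(y) − f(y))/t^α|² dy dt/t^{n+1})^{1/2}`. -/
def lusinSa (n : ℕ) (α : ℝ) (f : EuclideanSpace ℝ (Fin n) → ℂ)
    (x : EuclideanSpace ℝ (Fin n)) : ℝ≥0∞ :=
  (∫⁻ t in Set.Ioi (0 : ℝ),
      (∫⁻ y in Metric.ball x t,
        (‖(ballAvg f t y - f y) / ((t ^ α : ℝ) : ℂ)‖₊ : ℝ≥0∞) ^ 2)
        / ENNReal.ofReal (t ^ (n + 1))) ^ (1 / 2 : ℝ)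

/-- The classical Laplacian `Δφ = Σᵢ ∂²φ/∂xᵢ²`. -/
def lap {n : ℕ} (φ : EuclideanSpace ℝ (Fin n) → ℂ) (x : EuclideanSpace ℝ (Fin n)) : ℂ :=
  ∑ i : Fin n,
    fderiv ℝ (fun y => fderiv ℝ φ y (EuclideanSpace.single i 1)) x (EuclideanSpace.single i 1)

/-- `g` is the distributional Laplacian of `f`, i.e. `∫ f Δφ = ∫ g φ`
for every Schwartz test function `φ`. -/
def HasDistribLap {n : ℕ} (f g : EuclideanSpace ℝ (Fin n) → ℂ) : Prop :=
  ∀ φ : SchwartzMap (EuclideanSpace ℝ (Fin n)) ℂ,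
    ∫ x, f x * lap (⇑φ) x = ∫ x, g x * φ x

/-- The fractional Laplacian `(−Δ)^{α/2}` of a (Schwartz class) function, defined via the
Fourier transform as the Fourier multiplier with symbol `|ξ|^α` (in the `e^{-ix·ξ}`
normalization; equivalently `(2π|ξ|)^α` in the Mathlib normalization of `𝓕`). -/
def fracLapFun {n : ℕ} (α : ℝ) (φ : EuclideanSpace ℝ (Fin n) → ℂ) :
    EuclideanSpace ℝ (Fin n) → ℂ :=
  𝓕⁻ (fun ξ => (((2 * Real.pi * ‖ξ‖) ^ α : ℝ) : ℂ) * 𝓕 φ ξ)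

/-- `g = (−Δ)^{α/2} f` in the sense of tempered distributions:
`∫ f · (−Δ)^{α/2}φ = ∫ g · φ` for every Schwartz test function `φ`. -/
def HasFracLap {n : ℕ} (α : ℝ) (f g : EuclideanSpace ℝ (Fin n) → ℂ) : Prop :=
  ∀ φ : SchwartzMap (EuclideanSpace ℝ (Fin n)) ℂ,
    ∫ x, f x * fracLapFun α (⇑φ) x = ∫ x, g x * φ x

/-- The Fourier transform of the normalized indicator of the unit ball,
`χ̂(ξ) = (1/|B(0,1)|) ∫_{B(0,1)} e^{−i x·ξ} dx`. -/
def chiHat (n : ℕ) (ξ : EuclideanSpace ℝ (Fin n)) : ℂ :=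
  ⨍ x in Metric.ball (0 : EuclideanSpace ℝ (Fin n)) 1,
    Complex.exp (-Complex.I * ((inner ℝ x ξ : ℝ) : ℂ))

/-- The area function `S(F)` of a measurable function on `ℝⁿ × (0,∞)`. -/
def sqS (n : ℕ) (F : EuclideanSpace ℝ (Fin n) × ℝ → ℝ)
    (x : EuclideanSpace ℝ (Fin n)) : ℝ≥0∞ :=
  (∫⁻ t in Set.Ioi (0 : ℝ),
      (∫⁻ y in Metric.ball x t, (‖F (y, t)‖₊ : ℝ≥0∞) ^ 2)
        / ENNReal.ofReal (t ^ (n + 1))) ^ (1 / 2 : ℝ)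

/-- The Littlewood–Paley `g`-function `G(F)` of a measurable function on `ℝⁿ × (0,∞)`. -/
def sqG (n : ℕ) (F : EuclideanSpace ℝ (Fin n) × ℝ → ℝ)
    (x : EuclideanSpace ℝ (Fin n)) : ℝ≥0∞ :=
  (∫⁻ t in Set.Ioi (0 : ℝ), (‖F (x, t)‖₊ : ℝ≥0∞) ^ 2 / ENNReal.ofReal t) ^ (1 / 2 : ℝ)

/-- The Littlewood–Paley `g*_λ`-function `G*_λ(F)` of a measurable function on
`ℝⁿ × (0,∞)`. -/
def sqGstar (n : ℕ) (lam : ℝ) (F : EuclideanSpace ℝ (Fin n) × ℝ → ℝ)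
    (x : EuclideanSpace ℝ (Fin n)) : ℝ≥0∞ :=
  (∫⁻ t in Set.Ioi (0 : ℝ),
      (∫⁻ y, (‖F (y, t)‖₊ : ℝ≥0∞) ^ 2
          * ENNReal.ofReal ((t / (t + dist x y)) ^ (lam * n)))
        / ENNReal.ofReal (t ^ (n + 1))) ^ (1 / 2 : ℝ)

/-- The fractional Littlewood–Paley function `g*_{α,λ}(f)`. -/
def gstarA (n : ℕ) (α lam : ℝ) (f : EuclideanSpace ℝ (Fin n) → ℂ)
    (x : EuclideanSpace ℝ (Fin n)) : ℝ≥0∞ :=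
  (∫⁻ t in Set.Ioi (0 : ℝ),
      (∫⁻ y, (‖(ballAvg f t y - f y) / ((t ^ α : ℝ) : ℂ)‖₊ : ℝ≥0∞) ^ 2
          * ENNReal.ofReal ((t / (t + dist x y)) ^ (lam * n)))
        / ENNReal.ofReal (t ^ (n + 1))) ^ (1 / 2 : ℝ)

/-- The second order Littlewood–Paley function `g*_λ(f,g)`. -/
def gstar2 (n : ℕ) (lam : ℝ) (f g : EuclideanSpace ℝ (Fin n) → ℂ)
    (x : EuclideanSpace ℝ (Fin n)) : ℝ≥0∞ :=
  (∫⁻ t in Set.Ioi (0 : ℝ),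
      (∫⁻ y, (‖(ballAvg f t y - f y) / (t : ℂ) ^ 2 - ballAvg g t y‖₊ : ℝ≥0∞) ^ 2
          * ENNReal.ofReal ((t / (t + dist x y)) ^ (lam * n)))
        / ENNReal.ofReal (t ^ (n + 1))) ^ (1 / 2 : ℝ)

/-- `𝒦̂(ξ) = (χ̂(ξ) − 1)/|ξ|² + χ̂(ξ)/(2n+4)`. -/
def KHat (n : ℕ) (ξ : EuclideanSpace ℝ (Fin n)) : ℂ :=
  (chiHat n ξ - 1) / ((‖ξ‖ ^ 2 : ℝ) : ℂ) + chiHat n ξ / (2 * (n : ℂ) + 4)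

/-- A radial function on `ℝⁿ`. -/
def IsRadial {n : ℕ} (φ : EuclideanSpace ℝ (Fin n) → ℂ) : Prop :=
  ∀ x y : EuclideanSpace ℝ (Fin n), ‖x‖ = ‖y‖ → φ x = φ y

/-- `F_{j,k,t}`: the inverse Fourier transform of
`ξ ↦ φ̂(2^{−j−k}ξ)·((χ̂(tξ) − 1)/(t|ξ|)^α)·f̂(ξ)`. -/
def Fjkt (n : ℕ) (α : ℝ) (φ f : EuclideanSpace ℝ (Fin n) → ℂ) (j k : ℤ) (t : ℝ) :
    EuclideanSpace ℝ (Fin n) → ℂ :=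
  𝓕⁻ (fun ξ => 𝓕 φ (((2 : ℝ) ^ (-(j + k)) : ℝ) • ξ)
      * ((chiHat n (t • ξ) - 1) / ((((t * ‖ξ‖) ^ α : ℝ)) : ℂ)) * 𝓕 f ξ)

/-- The square function
`T_j(f)(x) = (Σ_{k∈ℤ} ∫_{2^{−k}}^{2^{−k+1}} ⨍_{B(0,2^{−k+1})} |F_{j,k,t}(x+y)|² dy dt/t)^{1/2}`. -/
def Tj (n : ℕ) (α : ℝ) (φ f : EuclideanSpace ℝ (Fin n) → ℂ) (j : ℤ)
    (x : EuclideanSpace ℝ (Fin n)) : ℝ≥0∞ :=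
  (∑' k : ℤ, ∫⁻ t in Set.Ioc ((2 : ℝ) ^ (-k)) ((2 : ℝ) ^ (-k + 1)),
      ((∫⁻ y in Metric.ball (0 : EuclideanSpace ℝ (Fin n)) ((2 : ℝ) ^ (-k + 1)),
          (‖Fjkt n α φ f j k t (x + y)‖₊ : ℝ≥0∞) ^ 2)
        / volume (Metric.ball (0 : EuclideanSpace ℝ (Fin n)) ((2 : ℝ) ^ (-k + 1))))
        / ENNReal.ofReal t) ^ (1 / 2 : ℝ)

/-- `G_{j,k,t}`: the inverse Fourier transform of
`ξ ↦ φ̂(2^{−j−k}ξ)·[(χ̂(tξ) − 1)/(t|ξ|)² + χ̂(tξ)/(2n+4)]·f̂(ξ)`. -/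
def Gjkt (n : ℕ) (φ f : EuclideanSpace ℝ (Fin n) → ℂ) (j k : ℤ) (t : ℝ) :
    EuclideanSpace ℝ (Fin n) → ℂ :=
  𝓕⁻ (fun ξ => 𝓕 φ (((2 : ℝ) ^ (-(j + k)) : ℝ) • ξ)
      * ((chiHat n (t • ξ) - 1) / ((((t * ‖ξ‖) ^ 2 : ℝ)) : ℂ)
          + chiHat n (t • ξ) / (2 * (n : ℂ) + 4)) * 𝓕 f ξ)

/-- The square function
`𝒯_j(f)(x) = (Σ_{k∈ℤ} ∫_{2^{−k}}^{2^{−k+1}} ⨍_{B(0,2^{−k+1})} |G_{j,k,t}(x+y)|² dy dt/t)^{1/2}`. -/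
def Tcj (n : ℕ) (φ f : EuclideanSpace ℝ (Fin n) → ℂ) (j : ℤ)
    (x : EuclideanSpace ℝ (Fin n)) : ℝ≥0∞ :=
  (∑' k : ℤ, ∫⁻ t in Set.Ioc ((2 : ℝ) ^ (-k)) ((2 : ℝ) ^ (-k + 1)),
      ((∫⁻ y in Metric.ball (0 : EuclideanSpace ℝ (Fin n)) ((2 : ℝ) ^ (-k + 1)),
          (‖Gjkt n φ f j k t (x + y)‖₊ : ℝ≥0∞) ^ 2)
        / volume (Metric.ball (0 : EuclideanSpace ℝ (Fin n)) ((2 : ℝ) ^ (-k + 1))))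
        / ENNReal.ofReal t) ^ (1 / 2 : ℝ)

abbrev Eun (n : ℕ) := EuclideanSpace ℝ (Fin n)

lemma my_nontrivial {n : ℕ} (hn : 0 < n) : Nontrivial (Eun n) :=
  ⟨⟨EuclideanSpace.single ⟨0, hn⟩ 1, 0, fun h => by simpa using congrArg (fun v : Eun n => v ⟨0, hn⟩) h⟩⟩

lemma my_volume_ball {n : ℕ} (hn : 0 < n) (x : Eun n) {t : ℝ} (ht : 0 ≤ t) :
    volume (ball x t) = ENNReal.ofReal (t ^ n) * volume (ball (0 : Eun n) 1) := by
  haveI := my_nontrivial hn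
  rw [Measure.addHaar_ball volume x ht, finrank_euclideanSpace_fin]

lemma my_ballAvg_norm_le {n : ℕ} (hn : 0 < n) {f : Eun n → ℂ} (hf : Integrable f)
    {t : ℝ} (ht : 0 < t) (y : Eun n) :
    ‖ballAvg f t y‖ ≤ (∫ z, ‖f z‖) / (t ^ n * (volume (ball (0 : Eun n) 1)).toReal) := by
  have hv : 0 < (volume (ball (0 : Eun n) 1)).toReal :=
    ENNReal.toReal_pos (measure_ball_pos volume _ one_pos).ne' measure_ball_lt_top.ne
  have hm : (volume (ball y t)).toReal = t ^ n * (volume (ball (0 : Eun n) 1)).toReal := by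
    rw [my_volume_ball hn y ht.le, ENNReal.toReal_mul, ENNReal.toReal_ofReal (by positivity)]
  rw [ballAvg, setAverage_eq, norm_smul, measureReal_def, hm]
  have h1 : ‖∫ z in ball y t, f z‖ ≤ ∫ z, ‖f z‖ :=
    (norm_integral_le_integral_norm _).trans
      (setIntegral_le_integral hf.norm (Filter.Eventually.of_forall fun z => norm_nonneg _))
  have h2 : 0 < t ^ n * (volume (ball (0 : Eun n) 1)).toReal := by positivity
  rw [norm_inv, Real.norm_eq_abs, _root_.abs_of_nonneg h2.le]
  rw [inv_mul_le_iff₀ h2, mul_div_cancel₀ _ h2.ne']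
  exact h1

def myBump (n : ℕ) : ContDiffBump (0 : Eun n) :=
  ⟨1/2, 1, by norm_num, by norm_num⟩

open scoped ContDiff

lemma my_exists_bump (n : ℕ) :
    ∃ F : SchwartzMap (EuclideanSpace ℝ (Fin n)) ℂ,
      (∀ y ∈ closedBall (0 : Eun n) (1/2), F y = 1) ∧ HasCompactSupport (⇑F) := by
  set φ := myBump n with hφ
  have hrIn : φ.rIn = 1/2 := rfl
  have hrOut : φ.rOut = 1 := rfl
  set f : Eun n → ℂ := fun x => ((φ x : ℝ) : ℂ) with hf
  have hsmooth : ContDiff ℝ ∞ f := Complex.ofRealCLM.contDiff.comp φ.contDiff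
  have hsupp : HasCompactSupport f :=
    φ.hasCompactSupport.comp_left (g := fun r : ℝ => (r : ℂ)) (by simp)
  have hdecay : ∀ k m : ℕ, ∃ C : ℝ, ∀ x, ‖x‖ ^ k * ‖iteratedFDeriv ℝ m f x‖ ≤ C := by
    intro k m
    obtain ⟨C, hC⟩ := (hsupp.iteratedFDeriv m).exists_bound_of_continuous
      (hsmooth.continuous_iteratedFDeriv (by exact_mod_cast le_top))
    refine ⟨max C 0, fun x => ?_⟩
    by_cases hx : x ∈ tsupport f
    · have hx1 : ‖x‖ ≤ 1 := by
        have hsub : tsupport f ⊆ closedBall (0 : Eun n) 1 := by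
          apply closure_minimal _ isClosed_closedBall
          intro z hz
          have hz' : φ z ≠ 0 := by
            simp only [hf, Function.mem_support, ne_eq, Complex.ofReal_eq_zero] at hz
            exact hz
          have := φ.support_eq ▸ Function.mem_support.2 hz'
          rw [hrOut] at this
          exact ball_subset_closedBall this
        simpa using hsub hx
      calc ‖x‖ ^ k * ‖iteratedFDeriv ℝ m f x‖
          ≤ 1 * ‖iteratedFDeriv ℝ m f x‖ := by
            apply mul_le_mul_of_nonneg_right _ (norm_nonneg _)
            exact pow_le_one₀ (norm_nonneg _) hx1
        _ ≤ C := by rw [one_mul]; exact hC x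
        _ ≤ max C 0 := le_max_left _ _
    · have : iteratedFDeriv ℝ m f x = 0 := by
        by_contra h
        exact hx (support_iteratedFDeriv_subset m (Function.mem_support.2 h))
      simp [this, le_max_right]
  refine ⟨⟨f, hsmooth, hdecay⟩, fun y hy => ?_, hsupp⟩
  have h1 : φ y = 1 := φ.one_of_mem_closedBall (hrIn ▸ hy)
  show f y = 1
  simp [hf, h1]

lemma my_lap_cont {n : ℕ} {f : Eun n → ℂ} (hf : ContDiff ℝ ∞ f) : Continuous (lap f) := by
  apply continuous_finset_sum
  intro i _
  have h1 : ContDiff ℝ ∞ (fun y => fderiv ℝ f y (EuclideanSpace.single i 1)) := by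
    exact (ContinuousLinearMap.apply ℝ ℂ (EuclideanSpace.single i (1:ℝ))).contDiff.comp
      (hf.fderiv_right (by exact_mod_cast le_top))
  have h2 : ContDiff ℝ ∞ (fun x => fderiv ℝ (fun y => fderiv ℝ f y (EuclideanSpace.single i 1)) x) :=
    h1.fderiv_right (by exact_mod_cast le_top)
  exact (ContinuousLinearMap.apply ℝ ℂ (EuclideanSpace.single i (1:ℝ))).continuous.comp h2.continuous

lemma my_lap_supp {n : ℕ} {f : Eun n → ℂ} :
    Function.support (lap f) ⊆ tsupport f := by
  intro x hx
  rw [Function.mem_support] at hx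
  by_contra hxs
  apply hx
  rw [lap]
  apply Finset.sum_eq_zero
  intro i _
  have h1 : Function.support (fun y => fderiv ℝ f y (EuclideanSpace.single i 1)) ⊆ tsupport f := by
    intro z hz
    rw [Function.mem_support] at hz
    have : fderiv ℝ f z ≠ 0 := fun h => hz (by simp [h])
    exact support_fderiv_subset ℝ (Function.mem_support.2 this)
  have h2 : tsupport (fun y => fderiv ℝ f y (EuclideanSpace.single i 1)) ⊆ tsupport f :=
    closure_minimal h1 (isClosed_closure)
  have h3 : fderiv ℝ (fun y => fderiv ℝ f y (EuclideanSpace.single i 1)) x = 0 := by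
    by_contra h
    exact hxs (h2 (support_fderiv_subset ℝ (Function.mem_support.2 h)))
  simp [h3]

lemma my_pointwise {n : ℕ} (hn : 5 ≤ n) {f g : Eun n → ℂ}
    (hfi : Integrable f) (hgi : Integrable g)
    (hfy1 : ∀ y ∈ closedBall (0 : Eun n) (1/2), f y = 1)
    {t : ℝ}
    (ht : 1 + 4 * ((∫ z, ‖f z‖) + ∫ z, ‖g z‖) / (volume (ball (0 : Eun n) 1)).toReal ≤ t)
    {y : Eun n} (hy : y ∈ closedBall (0 : Eun n) (1/2)) :
    1 / (2 * t ^ 2) ≤ ‖(ballAvg f t y - f y) / (t : ℂ) ^ 2 - ballAvg g t y‖ := by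
  have hn0 : 0 < n := by omega
  set v := (volume (ball (0 : Eun n) 1)).toReal with hv
  have hv0 : 0 < v :=
    ENNReal.toReal_pos (measure_ball_pos volume _ one_pos).ne' measure_ball_lt_top.ne
  set Mf := ∫ z, ‖f z‖ with hMf
  set Mg := ∫ z, ‖g z‖ with hMg
  have hMf0 : 0 ≤ Mf := integral_nonneg fun z => norm_nonneg _
  have hMg0 : 0 ≤ Mg := integral_nonneg fun z => norm_nonneg _
  set T : ℝ := 1 + 4 * (Mf + Mg) / v with hT
  have hT1 : 1 ≤ T := by
    rw [hT]; nlinarith [div_nonneg (by nlinarith : (0:ℝ) ≤ 4 * (Mf + Mg)) hv0.le]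
  have ht1 : 1 ≤ t := hT1.trans ht
  have ht0 : 0 < t := lt_of_lt_of_le one_pos ht1
  have hTv : T * v = v + 4 * (Mf + Mg) := by
    rw [hT]; field_simp
  have htT : T ≤ t ^ n := ht.trans (le_self_pow₀ ht1 (by omega))
  have ht2T : t ^ 2 * T ≤ t ^ n := by
    have h1 : t ^ n = t ^ 2 * t ^ (n - 2) := by
      rw [← pow_add]; congr 1; omega
    have h2 : T ≤ t ^ (n - 2) := ht.trans (le_self_pow₀ ht1 (by omega))
    rw [h1]
    exact mul_le_mul_of_nonneg_left h2 (by positivity)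
  have hA : ‖ballAvg f t y‖ ≤ 1 / 4 := by
    refine (my_ballAvg_norm_le hn0 hfi ht0 y).trans ?_
    rw [div_le_div_iff₀ (by positivity) (by norm_num)]
    nlinarith [mul_le_mul_of_nonneg_right htT hv0.le]
  have hB : ‖ballAvg g t y‖ ≤ 1 / (4 * t ^ 2) := by
    refine (my_ballAvg_norm_le hn0 hgi ht0 y).trans ?_
    rw [div_le_div_iff₀ (by positivity) (by positivity)]
    nlinarith [mul_le_mul_of_nonneg_right ht2T hv0.le]
  have htc : ((t : ℂ)) ≠ 0 := by exact_mod_cast ht0.ne'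
  have hkey : (ballAvg f t y - f y) / (t : ℂ) ^ 2 - ballAvg g t y
      = (ballAvg f t y / (t : ℂ) ^ 2 - ballAvg g t y) - 1 / (t : ℂ) ^ 2 := by
    rw [hfy1 y hy]; ring
  have hnorm2 : ‖(1 : ℂ) / (t : ℂ) ^ 2‖ = 1 / t ^ 2 := by
    rw [norm_div, norm_one, norm_pow, Complex.norm_real, Real.norm_eq_abs,
      _root_.abs_of_nonneg ht0.le]
  have hX : ‖ballAvg f t y / (t : ℂ) ^ 2 - ballAvg g t y‖ ≤ 1 / (2 * t ^ 2) := by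
    refine (norm_sub_le _ _).trans ?_
    have h2 : ‖ballAvg f t y / (t : ℂ) ^ 2‖ ≤ (1/4) / t ^ 2 := by
      rw [norm_div, norm_pow, Complex.norm_real, Real.norm_eq_abs, _root_.abs_of_nonneg ht0.le]
      gcongr
    calc ‖ballAvg f t y / (t : ℂ) ^ 2‖ + ‖ballAvg g t y‖
        ≤ (1/4) / t ^ 2 + 1 / (4 * t ^ 2) := add_le_add h2 hB
      _ = 1 / (2 * t ^ 2) := by field_simp; ring
  calc (1 : ℝ) / (2 * t ^ 2) = 1 / t ^ 2 - 1 / (2 * t ^ 2) := by field_simp; ring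
    _ ≤ ‖(1 : ℂ) / (t : ℂ) ^ 2‖ - ‖ballAvg f t y / (t : ℂ) ^ 2 - ballAvg g t y‖ := by
        rw [hnorm2]; linarith
    _ ≤ ‖(1 : ℂ) / (t : ℂ) ^ 2 - (ballAvg f t y / (t : ℂ) ^ 2 - ballAvg g t y)‖ :=
        norm_sub_norm_le _ _
    _ = ‖(ballAvg f t y / (t : ℂ) ^ 2 - ballAvg g t y) - 1 / (t : ℂ) ^ 2‖ := norm_sub_rev _ _
    _ = ‖(ballAvg f t y - f y) / (t : ℂ) ^ 2 - ballAvg g t y‖ := by rw [hkey]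

lemma my_Ilow {n : ℕ} (hn : 5 ≤ n) {f g : Eun n → ℂ}
    (hfi : Integrable f) (hgi : Integrable g)
    (hfy1 : ∀ y ∈ closedBall (0 : Eun n) (1/2), f y = 1)
    {x : Eun n}
    (hx : 1 + 4 * ((∫ z, ‖f z‖) + ∫ z, ‖g z‖) / (volume (ball (0 : Eun n) 1)).toReal + 2 ≤ ‖x‖) :
    volume (closedBall (0 : Eun n) (1/2)) *
      ENNReal.ofReal ((1 / 2 ^ (n + 8)) / ‖x‖ ^ (n + 4)) ≤
    ∫⁻ t in Set.Ioi (0 : ℝ),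
      (∫⁻ y in ball x t,
        (‖(ballAvg f t y - f y) / (t : ℂ) ^ 2 - ballAvg g t y‖₊ : ℝ≥0∞) ^ 2)
        / ENNReal.ofReal (t ^ (n + 1)) := by
  set T : ℝ := 1 + 4 * ((∫ z, ‖f z‖) + ∫ z, ‖g z‖) / (volume (ball (0 : Eun n) 1)).toReal with hT
  have hv0 : 0 < (volume (ball (0 : Eun n) 1)).toReal :=
    ENNReal.toReal_pos (measure_ball_pos volume _ one_pos).ne' measure_ball_lt_top.ne
  have hMf0 : 0 ≤ ∫ z, ‖f z‖ := integral_nonneg fun z => norm_nonneg _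
  have hMg0 : 0 ≤ ∫ z, ‖g z‖ := integral_nonneg fun z => norm_nonneg _
  have hT1 : 1 ≤ T := by
    rw [hT]
    nlinarith [div_nonneg (by nlinarith : (0:ℝ) ≤ 4 * ((∫ z, ‖f z‖) + ∫ z, ‖g z‖)) hv0.le]
  set R : ℝ := ‖x‖ with hR
  have hR3 : 3 ≤ R := by linarith
  set w := volume (closedBall (0 : Eun n) (1/2)) with hw
  have step1 : ∫⁻ t in Set.Ioc (R + 1) (2 * R),
      (∫⁻ y in ball x t,
        (‖(ballAvg f t y - f y) / (t : ℂ) ^ 2 - ballAvg g t y‖₊ : ℝ≥0∞) ^ 2)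
        / ENNReal.ofReal (t ^ (n + 1)) ≤
      ∫⁻ t in Set.Ioi (0 : ℝ),
      (∫⁻ y in ball x t,
        (‖(ballAvg f t y - f y) / (t : ℂ) ^ 2 - ballAvg g t y‖₊ : ℝ≥0∞) ^ 2)
        / ENNReal.ofReal (t ^ (n + 1)) := by
    apply lintegral_mono_set
    intro t htt
    simp only [Set.mem_Ioi]
    have := htt.1
    linarith
  refine le_trans ?_ step1
  have step2 : ∀ t ∈ Set.Ioc (R + 1) (2 * R),
      w * ENNReal.ofReal (1 / (4 * (2 * R) ^ (n + 5))) ≤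
      (∫⁻ y in ball x t,
        (‖(ballAvg f t y - f y) / (t : ℂ) ^ 2 - ballAvg g t y‖₊ : ℝ≥0∞) ^ 2)
        / ENNReal.ofReal (t ^ (n + 1)) := by
    intro t htt
    obtain ⟨ht1, ht2⟩ := htt
    have ht0 : 0 < t := by linarith
    have hsub : closedBall (0 : Eun n) (1/2) ⊆ ball x t := by
      intro y hy
      have h1 : dist y x ≤ ‖y‖ + ‖x‖ := by
        calc dist y x ≤ dist y 0 + dist 0 x := dist_triangle y 0 x
          _ = ‖y‖ + ‖x‖ := by rw [dist_zero_right, dist_zero_left]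
      have h2 : ‖y‖ ≤ 1/2 := by simpa using hy
      exact mem_ball.2 (by rw [hR] at ht1; linarith)
    have inner1 : w * ENNReal.ofReal (1 / (2 * t ^ 2)) ^ 2 ≤
        ∫⁻ y in ball x t,
          (‖(ballAvg f t y - f y) / (t : ℂ) ^ 2 - ballAvg g t y‖₊ : ℝ≥0∞) ^ 2 := by
      calc w * ENNReal.ofReal (1 / (2 * t ^ 2)) ^ 2
          = ∫⁻ _ in closedBall (0 : Eun n) (1/2), ENNReal.ofReal (1 / (2 * t ^ 2)) ^ 2 := by
            rw [setLIntegral_const, mul_comm]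
        _ ≤ ∫⁻ y in closedBall (0 : Eun n) (1/2),
              (‖(ballAvg f t y - f y) / (t : ℂ) ^ 2 - ballAvg g t y‖₊ : ℝ≥0∞) ^ 2 := by
            refine setLIntegral_mono' measurableSet_closedBall fun y hy => ?_
            refine pow_le_pow_left₀ ?_ ?_ 2
            · exact zero_le
            · rw [← enorm_eq_nnnorm, ← ofReal_norm]
              exact ENNReal.ofReal_le_ofReal
                (my_pointwise hn hfi hgi hfy1 (hT ▸ (show T ≤ t by linarith)) hy)
        _ ≤ _ := lintegral_mono_set hsub
    have hle : (1:ℝ) / (4 * (2 * R) ^ (n + 5)) ≤ (1 / (2 * t ^ 2)) ^ 2 / t ^ (n + 1) := by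
      have e : (1 / (2 * t ^ 2)) ^ 2 / t ^ (n + 1) = 1 / (4 * t ^ (n + 5)) := by
        rw [div_pow, one_pow, div_div, show n + 5 = 4 + (n + 1) by omega, pow_add]
        congr 1
        ring
      rw [e]
      have htle : t ^ (n + 5) ≤ (2 * R) ^ (n + 5) := pow_le_pow_left₀ ht0.le (by linarith) _
      have h4 : (0:ℝ) < 4 * t ^ (n + 5) := by positivity
      apply one_div_le_one_div_of_le h4
      nlinarith
    calc w * ENNReal.ofReal (1 / (4 * (2 * R) ^ (n + 5)))
        ≤ w * ENNReal.ofReal ((1 / (2 * t ^ 2)) ^ 2 / t ^ (n + 1)) :=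
          mul_le_mul_right (ENNReal.ofReal_le_ofReal hle) w
      _ = w * (ENNReal.ofReal (1 / (2 * t ^ 2)) ^ 2 / ENNReal.ofReal (t ^ (n + 1))) := by
          rw [ENNReal.ofReal_div_of_pos (by positivity), ENNReal.ofReal_pow (by positivity)]
      _ = w * ENNReal.ofReal (1 / (2 * t ^ 2)) ^ 2 / ENNReal.ofReal (t ^ (n + 1)) := by
          rw [mul_div_assoc]
      _ ≤ _ := ENNReal.div_le_div_right inner1 _
  calc w * ENNReal.ofReal ((1 / 2 ^ (n + 8)) / R ^ (n + 4))
      ≤ w * ENNReal.ofReal (1 / (4 * (2 * R) ^ (n + 5)) * (R - 1)) := by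
        gcongr
        have e1 : (2 * R) ^ (n + 5) = 2 ^ (n + 5) * R ^ (n + 5) := mul_pow _ _ _
        have e2 : R ^ (n + 5) = R ^ (n + 4) * R := by rw [← pow_succ]
        have e3 : (2:ℝ) ^ (n + 8) = 2 ^ (n + 5) * 8 := by
          rw [show n + 8 = (n + 5) + 3 by omega, pow_add]; norm_num
        have hp1 : (0:ℝ) < R ^ (n + 4) := by positivity
        have hp2 : (0:ℝ) < 2 ^ (n + 5) := by positivity
        rw [div_le_iff₀ (by positivity), e1, e2, e3]
        have goal : (1:ℝ) / (2 ^ (n + 5) * 8) =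
            1 / (4 * (2 ^ (n + 5) * (R ^ (n + 4) * R))) * (R / 2) * R ^ (n + 4) := by
          field_simp
          ring
        rw [goal]
        have : (0:ℝ) < 1 / (4 * (2 ^ (n + 5) * (R ^ (n + 4) * R))) := by positivity
        have hR2 : R / 2 ≤ R - 1 := by linarith
        nlinarith [mul_le_mul_of_nonneg_left hR2 this.le, hp1]
    _ = w * ENNReal.ofReal (1 / (4 * (2 * R) ^ (n + 5))) * ENNReal.ofReal (R - 1) := by
        rw [ENNReal.ofReal_mul (by positivity), mul_assoc]
    _ = w * ENNReal.ofReal (1 / (4 * (2 * R) ^ (n + 5))) * volume (Set.Ioc (R + 1) (2 * R)) := by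
        rw [Real.volume_Ioc]
        congr 2
        ring
    _ = ∫⁻ _ in Set.Ioc (R + 1) (2 * R), w * ENNReal.ofReal (1 / (4 * (2 * R) ^ (n + 5))) := by
        rw [setLIntegral_const]
    _ ≤ _ := setLIntegral_mono' measurableSet_Ioc step2

/-- Let `n ∈ ℕ` and `p ∈ (1,∞)`. If there is `C > 0` with
`‖S(f, Δf/(2n+4))‖_{Lᵖ} ≤ C‖Δf‖_{Lᵖ}` for every Schwartz function `f`, then
`p ≥ 2n/(n+4)`. -/
theorem stmt_4 (n : ℕ) (hn : 0 < n) (p : ℝ) (hp : 1 < p)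
    (h : ∃ C : ℝ, 0 < C ∧ ∀ f : SchwartzMap (EuclideanSpace ℝ (Fin n)) ℂ,
      lpNormE (lusinS2 n ⇑f (fun x => lap (⇑f) x / (2 * (n : ℂ) + 4))) p volume ≤
        ENNReal.ofReal C * eLpNorm (lap (⇑f)) (ENNReal.ofReal p) volume) :
    2 * (n : ℝ) / (n + 4) ≤ p := by
  by_contra hcon
  push_neg at hcon
  obtain ⟨C, hCpos, hbound⟩ := h
  have hn4 : (0:ℝ) < (n:ℝ) + 4 := by positivity
  have hq : p * ((n:ℝ) + 4) < 2 * n := by rwa [lt_div_iff₀ hn4] at hcon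
  have hn5 : 5 ≤ n := by
    by_contra h5
    push_neg at h5
    have : (n:ℝ) ≤ 4 := by exact_mod_cast Nat.lt_succ_iff.mp h5
    nlinarith
  obtain ⟨F, hF1, hFcs⟩ := my_exists_bump n
  have hsmooth : ContDiff ℝ ∞ (⇑F) := F.smooth'
  have hlapc : Continuous (lap (⇑F)) := my_lap_cont hsmooth
  set g : Eun n → ℂ := fun x => lap (⇑F) x / (2 * (n : ℂ) + 4) with hg
  have hgc : Continuous g := hlapc.div_const _
  have hlapcs : HasCompactSupport (lap (⇑F)) :=
    hFcs.of_isClosed_subset isClosed_closure (closure_minimal my_lap_supp isClosed_closure)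
  have hgcs : HasCompactSupport g :=
    hlapcs.comp_left (g := fun z : ℂ => z / (2 * (n : ℂ) + 4)) (by simp)
  have hfi : Integrable (⇑F) := hsmooth.continuous.integrable_of_hasCompactSupport hFcs
  have hgi : Integrable g := hgc.integrable_of_hasCompactSupport hgcs
  -- constants
  set v := (volume (ball (0 : Eun n) 1)).toReal with hv
  have hv0 : 0 < v :=
    ENNReal.toReal_pos (measure_ball_pos volume _ one_pos).ne' measure_ball_lt_top.ne
  have hvtop : volume (ball (0 : Eun n) 1) ≠ ⊤ := measure_ball_lt_top.ne
  set w := volume (closedBall (0 : Eun n) (1/2)) with hw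
  have hwtop : w ≠ ⊤ := measure_closedBall_lt_top.ne
  have hw0 : 0 < w.toReal := by
    apply ENNReal.toReal_pos _ hwtop
    rw [hw]
    exact (lt_of_lt_of_le (measure_ball_pos volume _ (by norm_num : (0:ℝ) < 1/2))
      (measure_mono ball_subset_closedBall)).ne'
  set T : ℝ := 1 + 4 * ((∫ z, ‖(⇑F) z‖) + ∫ z, ‖g z‖) / v with hT
  set c₀ : ℝ := 1 / 2 ^ (n + 8) with hc₀
  have hc₀0 : 0 < c₀ := by rw [hc₀]; positivity
  -- the LHS integral is infinite
  have hLHS : ∫⁻ x, lusinS2 n (⇑F) g x ^ p ∂volume = ⊤ := by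
    set wR := w.toReal with hwR
    set q : ℝ := (1/2) * p with hq2
    have hq2pos : 0 < q := by rw [hq2]; linarith
    -- lower bound over each dyadic shell
    have shell_bound : ∀ K : ℕ, T + 2 ≤ 2 ^ K →
        ENNReal.ofReal ((wR * (c₀ / 2 ^ ((K+1) * (n+4)))) ^ q * (2 ^ (K*n) * v)) ≤
          ∫⁻ x, lusinS2 n (⇑F) g x ^ p ∂volume := by
      intro K hK
      set sh : Set (Eun n) := ball (0 : Eun n) (2 ^ (K+1)) \ closedBall (0 : Eun n) (2 ^ K)
        with hsh
      have hvolsh : ENNReal.ofReal ((2:ℝ) ^ (K*n)) * volume (ball (0 : Eun n) 1) ≤ volume sh := by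
        rw [hsh, measure_diff (closedBall_subset_ball (by
              have : (2:ℝ) ^ K < 2 ^ (K+1) := by
                apply pow_lt_pow_right₀ one_lt_two (by omega)
              exact this))
            measurableSet_closedBall.nullMeasurableSet measure_closedBall_lt_top.ne]
        rw [my_volume_ball (show 0 < n by omega) (0 : Eun n)
            (show (0:ℝ) ≤ 2 ^ (K+1) by positivity),
          Measure.addHaar_closedBall volume _ (by positivity : (0:ℝ) ≤ 2 ^ K),
          finrank_euclideanSpace_fin]
        apply ENNReal.le_sub_of_add_le_right (by finiteness)
        rw [← add_mul, ← ENNReal.ofReal_add (by positivity) (by positivity)]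
        apply mul_le_mul_left
        apply ENNReal.ofReal_le_ofReal
        rw [← pow_mul, ← pow_mul]
        have e1 : (2:ℝ) ^ ((K+1) * n) = 2 ^ (K * n) * 2 ^ n := by
          rw [← pow_add]; congr 1; ring
        rw [e1]
        have h2n : (2:ℝ) ≤ 2 ^ n := by
          calc (2:ℝ) = 2 ^ 1 := (pow_one 2).symm
          _ ≤ 2 ^ n := pow_le_pow_right₀ one_le_two (by omega)
        nlinarith [pow_pos (by norm_num : (0:ℝ) < 2) (K * n), pow_pos (by norm_num : (0:ℝ) < 2) n]
      have hpoint : ∀ x ∈ sh,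
          ENNReal.ofReal ((wR * (c₀ / 2 ^ ((K+1) * (n+4)))) ^ q) ≤ lusinS2 n (⇑F) g x ^ p := by
        intro x hx
        obtain ⟨hx1, hx2⟩ := hx
        have hxlow : (2:ℝ) ^ K ≤ ‖x‖ := by
          by_contra hxc
          exact hx2 (by simpa [mem_closedBall, dist_zero_right] using le_of_not_ge hxc)
        have hxhi : ‖x‖ ≤ 2 ^ (K+1) := by
          have := mem_ball.1 hx1
          rw [dist_zero_right] at this
          exact this.le
        have hIlow : ENNReal.ofReal (wR * (c₀ / 2 ^ ((K+1) * (n+4)))) ≤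
            (∫⁻ t in Set.Ioi (0 : ℝ),
              (∫⁻ y in ball x t,
                (‖(ballAvg (⇑F) t y - (⇑F) y) / (t : ℂ) ^ 2 - ballAvg g t y‖₊ : ℝ≥0∞) ^ 2)
                / ENNReal.ofReal (t ^ (n + 1))) := by
          refine le_trans ?_ (my_Ilow hn5 hfi hgi hF1 (by rw [← hv, ← hT]; linarith))
          rw [ENNReal.ofReal_mul (by positivity), hwR, ENNReal.ofReal_toReal hwtop, ← hc₀]
          apply mul_le_mul_right
          apply ENNReal.ofReal_le_ofReal
          have hx0 : (0:ℝ) < ‖x‖ := lt_of_lt_of_le (by positivity) hxlow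
          have hxp : ‖x‖ ^ (n+4) ≤ 2 ^ ((K+1) * (n+4)) := by
            calc ‖x‖ ^ (n+4) ≤ ((2:ℝ) ^ (K+1)) ^ (n+4) := pow_le_pow_left₀ hx0.le hxhi _
              _ = 2 ^ ((K+1) * (n+4)) := by rw [← pow_mul]
          gcongr
        have hS : (ENNReal.ofReal (wR * (c₀ / 2 ^ ((K+1) * (n+4))))) ^ ((1/2 : ℝ) * p) ≤
            lusinS2 n (⇑F) g x ^ p := by
          rw [lusinS2, ENNReal.rpow_mul]
          exact ENNReal.rpow_le_rpow (ENNReal.rpow_le_rpow hIlow (by norm_num)) (by linarith)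
        refine le_trans (le_of_eq ?_) hS
        rw [← hq2, ENNReal.ofReal_rpow_of_pos (mul_pos hw0 (by positivity))]
      calc ENNReal.ofReal ((wR * (c₀ / 2 ^ ((K+1) * (n+4)))) ^ q * (2 ^ (K*n) * v))
          = ENNReal.ofReal ((wR * (c₀ / 2 ^ ((K+1) * (n+4)))) ^ q) *
              (ENNReal.ofReal ((2:ℝ) ^ (K*n)) * volume (ball (0 : Eun n) 1)) := by
            rw [← ENNReal.ofReal_toReal hvtop, ← hv]
            rw [← ENNReal.ofReal_mul (by positivity), ← ENNReal.ofReal_mul (by positivity)]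
        _ ≤ ENNReal.ofReal ((wR * (c₀ / 2 ^ ((K+1) * (n+4)))) ^ q) * volume sh :=
            mul_le_mul_right hvolsh _
        _ = ∫⁻ _ in sh, ENNReal.ofReal ((wR * (c₀ / 2 ^ ((K+1) * (n+4)))) ^ q) := by
            rw [setLIntegral_const]
        _ ≤ ∫⁻ x in sh, lusinS2 n (⇑F) g x ^ p :=
            setLIntegral_mono' (measurableSet_ball.diff measurableSet_closedBall) hpoint
        _ ≤ ∫⁻ x, lusinS2 n (⇑F) g x ^ p := setLIntegral_le_lintegral _ _
    -- conclude unboundedness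
    by_contra hfin
    set L := ∫⁻ x, lusinS2 n (⇑F) g x ^ p ∂volume with hL
    have hLne : L ≠ ⊤ := hfin
    -- rewrite the shell bound as a geometric sequence
    set b : ℝ := 2 ^ n / ((2:ℝ) ^ (n+4)) ^ q with hb
    set c₄ : ℝ := (wR * c₀ / 2 ^ (n+4)) ^ q * v with hc₄
    have hbase : (0:ℝ) < ((2:ℝ) ^ (n+4)) ^ q := Real.rpow_pos_of_pos (by positivity) _
    have hc₄0 : 0 < c₄ := by
      rw [hc₄]
      have : (0:ℝ) < (wR * c₀ / 2 ^ (n+4)) ^ q := Real.rpow_pos_of_pos (by positivity) _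
      positivity
    have hb1 : 1 < b := by
      rw [hb, lt_div_iff₀ hbase, one_mul]
      have e1 : ((2:ℝ) ^ (n+4)) ^ q = (2:ℝ) ^ (((n:ℝ)+4) * q) := by
        rw [← Real.rpow_natCast 2 (n+4), ← Real.rpow_mul (by norm_num)]
        norm_num
      have e2 : (2:ℝ) ^ n = (2:ℝ) ^ ((n:ℝ)) := by rw [Real.rpow_natCast]
      rw [e1, e2]
      apply Real.rpow_lt_rpow_left_iff (by norm_num : (1:ℝ) < 2) |>.2
      rw [hq2]
      nlinarith
    have hrho : ∀ K : ℕ,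
        (wR * (c₀ / 2 ^ ((K+1) * (n+4)))) ^ q * (2 ^ (K*n) * v) = c₄ * b ^ K := by
      intro K
      have e1 : wR * (c₀ / 2 ^ ((K+1) * (n+4))) =
          (wR * c₀ / 2 ^ (n+4)) * (1 / 2 ^ (n+4)) ^ K := by
        have h1 : ((1:ℝ) / 2 ^ (n+4)) ^ K = 1 / 2 ^ ((n+4) * K) := by
          rw [div_pow, one_pow, ← pow_mul]
        have h2 : (2:ℝ) ^ ((K+1) * (n+4)) = 2 ^ (n+4) * 2 ^ ((n+4) * K) := by
          rw [← pow_add]; congr 1; ring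
        rw [h1, h2]
        field_simp
      have e2 : ((wR * c₀ / 2 ^ (n+4)) * ((1 / 2 ^ (n+4) : ℝ)) ^ K) ^ q =
          (wR * c₀ / 2 ^ (n+4)) ^ q * (((1 / 2 ^ (n+4) : ℝ)) ^ q) ^ K := by
        rw [Real.mul_rpow (by positivity) (by positivity)]
        congr 1
        rw [← Real.rpow_natCast ((1 / 2 ^ (n+4) : ℝ)) K, ← Real.rpow_mul (by positivity),
          mul_comm (K:ℝ) q, Real.rpow_mul (by positivity), Real.rpow_natCast]
      rw [e1, e2, hc₄, hb]
      have e3 : ((1 / 2 ^ (n+4) : ℝ)) ^ q = 1 / ((2:ℝ) ^ (n+4)) ^ q := by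
        rw [Real.div_rpow (by norm_num) (by positivity), Real.one_rpow]
      rw [e3]
      have e4 : (2:ℝ) ^ (K * n) = ((2:ℝ) ^ n) ^ K := by rw [← pow_mul]; congr 1; ring
      rw [e4]
      field_simp
      ring
    obtain ⟨K₀, hK₀⟩ := pow_unbounded_of_one_lt (T + 2) (by norm_num : (1:ℝ) < 2)
    obtain ⟨K₁, hK₁⟩ := pow_unbounded_of_one_lt (L.toReal / c₄) hb1
    set K := max K₀ K₁ with hKdef
    have hKT : T + 2 ≤ 2 ^ K :=
      hK₀.le.trans (pow_le_pow_right₀ one_le_two (le_max_left _ _))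
    have hKb : L.toReal / c₄ < b ^ K :=
      lt_of_lt_of_le hK₁ (pow_le_pow_right₀ hb1.le (le_max_right _ _))
    have hsb := shell_bound K hKT
    rw [hrho K] at hsb
    have hle : c₄ * b ^ K ≤ L.toReal :=
      (ENNReal.ofReal_le_iff_le_toReal hLne).1 hsb
    rw [div_lt_iff₀ hc₄0] at hKb
    linarith [hKb]
  -- RHS is finite
  have hRHS : eLpNorm (lap (⇑F)) (ENNReal.ofReal p) volume < ⊤ :=
    (hlapc.memLp_of_hasCompactSupport (p := ENNReal.ofReal p) hlapcs).2
  have hfinal := hbound F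
  rw [lpNormE] at hfinal
  rw [show (fun x => lap (⇑F) x / (2 * (n : ℂ) + 4)) = g from rfl] at hfinal
  rw [hLHS, ENNReal.top_rpow_of_pos (by positivity : (0:ℝ) < 1 / p)] at hfinal
  exact absurd hfinal (by
    apply not_le_of_gt
    exact ENNReal.mul_lt_top ENNReal.ofReal_lt_top hRHS)
end
end

section
/- Let n ∈ ℕ, α ∈ (0,2) with n > 2α, and p ∈ (1, ∞). If there exists a positive constant C such that ‖S_α(f)‖_{L^p(ℝⁿ)} ≤ C‖(−Δ)^{α/2} f‖_{L^p(ℝⁿ)} for every Schwartz function f on ℝⁿ, then p ≥ 2n/(2α+n). In particular, for p ∈ (1, 2n/(2α+n)) the characterization of W^{α,p}(ℝⁿ) by the area function S_α fails. -/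
open MeasureTheory Metric Complex
open scoped ENNReal FourierTransform RealInnerProductSpace

noncomputable section
set_option maxHeartbeats 1000000

/-- Build a Schwartz map from a smooth compactly supported function. -/
noncomputable def toSchwartz {n : ℕ} (f : EuclideanSpace ℝ (Fin n) → ℂ)
    (hf : ContDiff ℝ ((⊤ : ℕ∞) : WithTop ℕ∞) f)
    (hsupp : HasCompactSupport f) : SchwartzMap (EuclideanSpace ℝ (Fin n)) ℂ where
  toFun := f
  smooth' := hf
  decay' := by
    intro k m
    have hcont : Continuous fun x : EuclideanSpace ℝ (Fin n) =>
        ‖x‖ ^ k * ‖iteratedFDeriv ℝ m f x‖ :=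
      (continuous_norm.pow k).mul (hf.continuous_iteratedFDeriv (by exact_mod_cast le_top)).norm
    have hcs : HasCompactSupport fun x : EuclideanSpace ℝ (Fin n) =>
        ‖x‖ ^ k * ‖iteratedFDeriv ℝ m f x‖ :=
      ((hsupp.iteratedFDeriv m).norm).mul_left
    obtain ⟨C, hC⟩ := hcont.bounded_above_of_compact_support hcs
    exact ⟨C, fun x => (le_abs_self _).trans ((Real.norm_eq_abs _) ▸ hC x)⟩

@[simp] lemma toSchwartz_apply {n : ℕ} (f : EuclideanSpace ℝ (Fin n) → ℂ)
    (hf : ContDiff ℝ ((⊤ : ℕ∞) : WithTop ℕ∞) f) (hs : HasCompactSupport f)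
    (x : EuclideanSpace ℝ (Fin n)) : toSchwartz f hf hs x = f x := rfl

lemma toSchwartz_coe {n : ℕ} (f : EuclideanSpace ℝ (Fin n) → ℂ)
    (hf : ContDiff ℝ ((⊤ : ℕ∞) : WithTop ℕ∞) f) (hs : HasCompactSupport f) :
    ⇑(toSchwartz f hf hs) = f := rfl

lemma schwartz_decay_bound {n : ℕ} (f : SchwartzMap (EuclideanSpace ℝ (Fin n)) ℂ) :
    ∃ C : ℝ, 0 < C ∧ ∀ x, ‖f x‖ ≤ C * (1 + ‖x‖) ^ (-(n + 1 : ℝ)) := by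
  set S : ℝ := 2 ^ (n+1) * (Finset.Iic ((n+1), 0)).sup
      (fun m => SchwartzMap.seminorm ℝ m.1 m.2) f with hS
  have hS0 : 0 ≤ S := by positivity
  refine ⟨S + 1, by positivity, fun x => ?_⟩
  have h1x : (0:ℝ) < 1 + ‖x‖ := by positivity
  have hb := SchwartzMap.one_add_le_sup_seminorm_apply (𝕜 := ℝ) (m := ((n+1), 0))
    le_rfl le_rfl f x
  rw [norm_iteratedFDeriv_zero] at hb
  have : ‖f x‖ ≤ S / (1 + ‖x‖) ^ (n+1) := by
    rw [le_div_iff₀ (by positivity)]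
    linarith [hb]
  refine this.trans ?_
  rw [Real.rpow_neg h1x.le, div_eq_mul_inv]
  rw [show ((n:ℝ) + 1) = ((n+1 : ℕ) : ℝ) by push_cast; ring, Real.rpow_natCast]
  have hinv : (0:ℝ) ≤ ((1 + ‖x‖) ^ (n+1))⁻¹ := by positivity
  nlinarith [mul_le_mul_of_nonneg_right (le_of_eq (rfl : S = S)) hinv]

lemma schwartz_eLpNorm_lt_top {n : ℕ} (f : SchwartzMap (EuclideanSpace ℝ (Fin n)) ℂ)
    {p : ℝ} (hp : 1 < p) : eLpNorm (⇑f) (ENNReal.ofReal p) volume < ⊤ := by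
  have hp0 : (0:ℝ) < p := by linarith
  obtain ⟨C, hC, hbd⟩ := schwartz_decay_bound f
  have hfin : ∫⁻ x, (‖f x‖₊ : ℝ≥0∞) ^ p ∂volume < ⊤ := by
    have hint : Integrable (fun x : EuclideanSpace ℝ (Fin n) =>
        C ^ p * (1 + ‖x‖) ^ (-((n + 1 : ℝ) * p))) volume := by
      refine Integrable.const_mul ?_ _
      apply integrable_one_add_norm
      rw [finrank_euclideanSpace_fin]
      nlinarith [Nat.cast_nonneg (α := ℝ) n]
    refine lt_of_le_of_lt (lintegral_mono fun x => ?_) hint.lintegral_lt_top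
    rw [← ENNReal.ofReal_coe_nnreal, coe_nnnorm,
      ENNReal.ofReal_rpow_of_nonneg (norm_nonneg _) hp0.le]
    apply ENNReal.ofReal_le_ofReal
    calc ‖f x‖ ^ p ≤ (C * (1 + ‖x‖) ^ (-(n + 1 : ℝ))) ^ p :=
          Real.rpow_le_rpow (norm_nonneg _) (hbd x) hp0.le
    _ = C ^ p * (1 + ‖x‖) ^ (-((n + 1 : ℝ) * p)) := by
        rw [Real.mul_rpow hC.le (Real.rpow_nonneg (by positivity) _),
          ← Real.rpow_mul (by positivity)]
        congr 2
        ring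
  rw [eLpNorm_eq_lintegral_rpow_enorm_toReal (by simp [hp0]) (by simp)]
  rw [ENNReal.toReal_ofReal hp0.le]
  exact ENNReal.rpow_lt_top_of_nonneg (by positivity) hfin.ne

lemma norm_ballAvg_le {n : ℕ} (f : EuclideanSpace ℝ (Fin n) → ℂ) (hf : Integrable f volume)
    {t : ℝ} (y : EuclideanSpace ℝ (Fin n)) :
    ‖ballAvg f t y‖ ≤ (volume (ball y t)).toReal⁻¹ * ∫ x, ‖f x‖ := by
  rw [ballAvg, setAverage_eq, norm_smul, Real.norm_eq_abs,
    _root_.abs_of_nonneg (inv_nonneg.2 measureReal_nonneg)]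
  have h1 : ‖∫ x in ball y t, f x‖ ≤ ∫ x in ball y t, ‖f x‖ := norm_integral_le_integral_norm f
  have h2 : ∫ x in ball y t, ‖f x‖ ≤ ∫ x, ‖f x‖ :=
    integral_mono_measure Measure.restrict_le_self (ae_of_all _ fun x => norm_nonneg _) hf.norm
  exact mul_le_mul_of_nonneg_left (h1.trans h2) (inv_nonneg.2 ENNReal.toReal_nonneg)


lemma lintegral_div_top {n : ℕ} (hn : 0 < n) {S : EuclideanSpace ℝ (Fin n) → ℝ≥0∞}
    {v1 : ℝ} (hv1 : 0 < v1)
    (hVc : ∀ r : ℝ, 0 ≤ r → volume (closedBall (0 : EuclideanSpace ℝ (Fin n)) r) =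
      ENNReal.ofReal (r ^ n * v1))
    {R c2 s : ℝ} (hR0 : 0 < R) (hc2 : 0 < c2) (hs_pos : 0 < s) (hsn : s < n)
    (hSx : ∀ x : EuclideanSpace ℝ (Fin n), R ≤ ‖x‖ → ENNReal.ofReal (c2 * ‖x‖ ^ (-s)) ≤ S x) :
    ∫⁻ x, S x ∂volume = ⊤ := by
  by_contra hne
  set T := ∫⁻ x, S x ∂volume with hT
  set B : ℝ := (2:ℝ) ^ ((n:ℝ) - s) with hBdef
  have hB : 1 < B := by
    rw [hBdef, Real.one_lt_rpow_iff_of_pos (by norm_num)]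
    left
    exact ⟨by norm_num, by linarith⟩
  have h2s : (0:ℝ) < (2:ℝ) ^ (-s) := Real.rpow_pos_of_pos (by norm_num) _
  have hRs : (0:ℝ) < R ^ ((n:ℝ) - s) := Real.rpow_pos_of_pos hR0 _
  set c3 : ℝ := c2 * v1 * R ^ ((n:ℝ) - s) * (2:ℝ) ^ (-s) with hc3def
  have hc3 : 0 < c3 := by positivity
  have hiter : ∀ k : ℕ, c2 * (R*2^(k+1)) ^ (-s) * ((R*2^k)^n * v1) = c3 * B ^ k := by
    intro k
    induction k with
    | zero =>
      have h21 : (R*(2:ℝ)^(0+1)) = R*2 := by norm_num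
      have h20 : (R*(2:ℝ)^(0:ℕ)) = R := by norm_num
      rw [h21, h20, pow_zero, mul_one, Real.mul_rpow hR0.le (by norm_num)]
      have hRn : (R:ℝ)^n = R ^ ((n:ℝ)) := (Real.rpow_natCast R n).symm
      rw [hRn,
        show c2 * (R ^ (-s) * (2:ℝ) ^ (-s)) * (R ^ ((n:ℝ)) * v1)
          = (c2 * v1 * (2:ℝ) ^ (-s)) * (R ^ (-s) * R ^ ((n:ℝ))) by ring,
        ← Real.rpow_add hR0, show -s + (n:ℝ) = (n:ℝ) - s by ring, hc3def]
      ring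
    | succ k ih =>
      have hpos1 : (0:ℝ) < R*2^(k+1) := by positivity
      have ha : (R*(2:ℝ)^(k+1+1)) = 2*(R*2^(k+1)) := by rw [pow_succ]; ring
      have hb2 : (R*(2:ℝ)^(k+1)) = 2*(R*2^k) := by rw [pow_succ]; ring
      have h2n : ((2:ℝ))^n = (2:ℝ) ^ ((n:ℝ)) := (Real.rpow_natCast 2 n).symm
      have hBsplit : B = (2:ℝ) ^ ((n:ℝ)) * (2:ℝ) ^ (-s) := by
        rw [hBdef, ← Real.rpow_add (by norm_num), show (n:ℝ) + -s = (n:ℝ) - s by ring]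
      calc c2 * (R*2^(k+1+1)) ^ (-s) * ((R*2^(k+1))^n * v1)
          = c2 * ((2:ℝ)^(-s) * (R*2^(k+1)) ^ (-s)) * (((2:ℝ)^n * (R*2^k)^n) * v1) := by
            rw [← Real.mul_rpow (by norm_num : (0:ℝ) ≤ 2) hpos1.le, ← ha, ← mul_pow, ← hb2]
        _ = ((2:ℝ)^((n:ℝ)) * (2:ℝ)^(-s)) * (c2 * (R*2^(k+1)) ^ (-s) * ((R*2^k)^n * v1)) := by
            rw [h2n]; ring
        _ = B * (c3 * B^k) := by rw [ih, hBsplit]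
        _ = c3 * B^(k+1) := by ring
  have hterm : ∀ k : ℕ, ENNReal.ofReal (c3 * B ^ k) ≤ T := by
    intro k
    have hid := hiter k
    set r1 : ℝ := R * 2^k with hr1def
    set r2 : ℝ := R * 2^(k+1) with hr2def
    have hr10 : (0:ℝ) < r1 := by positivity
    have hr20 : (0:ℝ) < r2 := by positivity
    have h2r : r2 = 2*r1 := by rw [hr1def, hr2def, pow_succ]; ring
    have hr12 : r1 ≤ r2 := by nlinarith
    have h2k : (1:ℝ) ≤ 2^k := one_le_pow₀ (by norm_num)
    have hRr1 : R ≤ r1 := by rw [hr1def]; nlinarith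
    have hvol : volume (closedBall (0:EuclideanSpace ℝ (Fin n)) r2 \ closedBall 0 r1)
        = ENNReal.ofReal (r2^n * v1) - ENNReal.ofReal (r1^n * v1) := by
      rw [measure_diff (closedBall_subset_closedBall hr12)
        measurableSet_closedBall.nullMeasurableSet measure_closedBall_lt_top.ne,
        hVc r2 hr20.le, hVc r1 hr10.le]
    have hlb : ∀ x ∈ closedBall (0:EuclideanSpace ℝ (Fin n)) r2 \ closedBall 0 r1,
        ENNReal.ofReal (c2 * r2 ^ (-s)) ≤ S x := by
      intro x hx
      have hx2 : ‖x‖ ≤ r2 := by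
        have h6 := hx.1
        rwa [mem_closedBall, dist_zero_right] at h6
      have hx1 : r1 < ‖x‖ := by
        by_contra hcc
        push_neg at hcc
        exact hx.2 (by rwa [mem_closedBall, dist_zero_right])
      have hxR : R ≤ ‖x‖ := le_trans hRr1 hx1.le
      refine le_trans (ENNReal.ofReal_le_ofReal ?_) (hSx x hxR)
      have hmono : r2 ^ (-s) ≤ ‖x‖ ^ (-s) :=
        Real.rpow_le_rpow_of_nonpos (lt_trans hr10 hx1) hx2 (by linarith)
      exact mul_le_mul_of_nonneg_left hmono hc2.le
    have hstep : ENNReal.ofReal (c3 * B ^ k) ≤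
        ENNReal.ofReal (c2 * r2 ^ (-s)) *
          volume (closedBall (0:EuclideanSpace ℝ (Fin n)) r2 \ closedBall 0 r1) := by
      rw [hvol, ← ENNReal.ofReal_sub _ (by positivity), ← ENNReal.ofReal_mul (by positivity)]
      apply ENNReal.ofReal_le_ofReal
      have hgrow : r1^n ≤ r2^n - r1^n := by
        have hmp : (2:ℝ)^n * r1^n = r2^n := by rw [h2r]; exact (mul_pow 2 r1 n).symm
        have h2n2 : (2:ℝ) ≤ 2^n := le_self_pow₀ (by norm_num) hn.ne'
        nlinarith [pow_nonneg hr10.le n]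
      have hq1 : (0:ℝ) < r2 ^ (-s) := Real.rpow_pos_of_pos hr20 _
      have hthat := mul_le_mul_of_nonneg_left
        (mul_le_mul_of_nonneg_right hgrow hv1.le)
        (le_of_lt (mul_pos hc2 hq1))
      nlinarith [hid, hthat]
    calc ENNReal.ofReal (c3 * B ^ k)
        ≤ ENNReal.ofReal (c2 * r2 ^ (-s)) *
          volume (closedBall (0:EuclideanSpace ℝ (Fin n)) r2 \ closedBall 0 r1) := hstep
      _ = ∫⁻ _ in closedBall (0:EuclideanSpace ℝ (Fin n)) r2 \ closedBall 0 r1,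
            ENNReal.ofReal (c2 * r2^(-s)) := (setLIntegral_const _ _).symm
      _ ≤ ∫⁻ x in closedBall (0:EuclideanSpace ℝ (Fin n)) r2 \ closedBall 0 r1, S x :=
          setLIntegral_mono' (measurableSet_closedBall.diff measurableSet_closedBall) hlb
      _ ≤ T := setLIntegral_le_lintegral _ _
  obtain ⟨k, hk⟩ := pow_unbounded_of_one_lt (T.toReal / c3) hB
  have hk2 := (ENNReal.ofReal_le_iff_le_toReal hne).1 (hterm k)
  rw [div_lt_iff₀ hc3] at hk
  linarith

/-- Let `n ∈ ℕ`, `α ∈ (0,2)` with `n > 2α`, and `p ∈ (1,∞)`. If there is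
`C > 0` with `‖S_α(f)‖_{Lᵖ} ≤ C‖(−Δ)^{α/2}f‖_{Lᵖ}` for every Schwartz function `f`,
then `p ≥ 2n/(2α+n)`. -/
theorem stmt_8 (n : ℕ) (hn : 0 < n) (α : ℝ) (hα : α ∈ Set.Ioo (0 : ℝ) 2)
    (hna : 2 * α < n) (p : ℝ) (hp : 1 < p)
    (h : ∃ C : ℝ, 0 < C ∧ ∀ f : SchwartzMap (EuclideanSpace ℝ (Fin n)) ℂ,
      lpNormE (lusinSa n α ⇑f) p volume ≤
        ENNReal.ofReal C * eLpNorm (fracLapFun α ⇑f) (ENNReal.ofReal p) volume) :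
    2 * (n : ℝ) / (2 * α + n) ≤ p := by
  by_contra hcon
  push_neg at hcon
  obtain ⟨C, hCpos, hbound⟩ := h
  obtain ⟨hα0, hα2⟩ := hα
  have hn1 : (1:ℝ) ≤ (n:ℝ) := by exact_mod_cast hn
  have hp0 : (0:ℝ) < p := by linarith
  -- construct the test function ψ
  set ξ0 : EuclideanSpace ℝ (Fin n) := EuclideanSpace.single ⟨0, hn⟩ (3/2 : ℝ) with hξ0def
  have hξ0 : ‖ξ0‖ = 3/2 := by
    rw [hξ0def, EuclideanSpace.norm_single]; norm_num
  haveI : Nontrivial (EuclideanSpace ℝ (Fin n)) :=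
    ⟨⟨ξ0, 0, fun hc => by rw [hc, norm_zero] at hξ0; norm_num at hξ0⟩⟩
  set b : ContDiffBump ξ0 := ⟨1/8, 1/4, by norm_num, by norm_num⟩ with hbdef
  set hfun : EuclideanSpace ℝ (Fin n) → ℂ := fun ξ => ((b ξ : ℝ) : ℂ) with hfundef
  have hzero : ∀ ξ : EuclideanSpace ℝ (Fin n), ‖ξ‖ ≤ 5/4 → hfun ξ = 0 := by
    intro ξ hξ
    have hd : b.rOut ≤ dist ξ ξ0 := by
      have h1 : ‖ξ0‖ - ‖ξ‖ ≤ ‖ξ0 - ξ‖ := norm_sub_norm_le ξ0 ξ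
      have h2 : dist ξ ξ0 = ‖ξ0 - ξ‖ := by rw [dist_eq_norm, norm_sub_rev]
      have h3 : b.rOut = 1/4 := rfl
      rw [h2, h3]; rw [hξ0] at h1; linarith
    have : b ξ = 0 := b.zero_of_le_dist hd
    simp [hfundef, this]
  have hsmooth : ContDiff ℝ ((⊤ : ℕ∞) : WithTop ℕ∞) hfun :=
    Complex.ofRealCLM.contDiff.comp b.contDiff
  have hsupp : HasCompactSupport hfun :=
    b.hasCompactSupport.comp_left (g := fun r : ℝ => (r:ℂ)) (by simp)
  set hs := toSchwartz hfun hsmooth hsupp with hsdef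
  set ψ := (FourierTransform.fourierCLE ℂ (SchwartzMap (EuclideanSpace ℝ (Fin n)) ℂ)).symm hs with hψdef
  have hFψ : 𝓕 ⇑ψ = ⇑hs := by
    rw [hψdef, FourierTransform.fourierCLE_symm_apply, ← SchwartzMap.fourier_coe,
      FourierInvPair.fourier_fourierInv_eq]
  -- the multiplier function
  set mfun : EuclideanSpace ℝ (Fin n) → ℂ :=
    fun ξ => (((2 * Real.pi * ‖ξ‖) ^ α : ℝ) : ℂ) * hs ξ with hmdef
  have hmsupp : HasCompactSupport mfun := by
    have h1 : HasCompactSupport (⇑hs) := hsupp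
    exact h1.mul_left
  have hmsmooth : ContDiff ℝ ((⊤ : ℕ∞) : WithTop ℕ∞) mfun := by
    rw [contDiff_iff_contDiffAt]
    intro ξ
    by_cases hξ : ‖ξ‖ < 5/4
    · have hev : mfun =ᶠ[nhds ξ] (fun _ => 0) := by
        have hball : Metric.ball ξ (5/4 - ‖ξ‖) ∈ nhds ξ := Metric.ball_mem_nhds _ (by linarith)
        filter_upwards [hball] with η hη
        have hη' : ‖η‖ ≤ 5/4 := by
          have h1 : ‖η‖ - ‖ξ‖ ≤ ‖η - ξ‖ := norm_sub_norm_le η ξ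
          rw [mem_ball, dist_eq_norm] at hη
          linarith
        have : hs η = 0 := hzero η hη'
        simp [hmdef, this]
      exact (contDiffAt_const (c := (0:ℂ))).congr_of_eventuallyEq hev
    · push_neg at hξ
      have hξne : ξ ≠ 0 := by
        intro hc; rw [hc, norm_zero] at hξ; norm_num at hξ
      have h1 : ContDiffAt ℝ ((⊤ : ℕ∞) : WithTop ℕ∞)
          (fun η : EuclideanSpace ℝ (Fin n) => 2 * Real.pi * ‖η‖) ξ :=
        contDiffAt_const.mul (contDiffAt_norm ℝ hξne)
      have h2 : ContDiffAt ℝ ((⊤ : ℕ∞) : WithTop ℕ∞)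
          (fun η : EuclideanSpace ℝ (Fin n) => (2 * Real.pi * ‖η‖) ^ α) ξ :=
        h1.rpow_const_of_ne (by positivity)
      have h3 : ContDiffAt ℝ ((⊤ : ℕ∞) : WithTop ℕ∞)
          (fun η : EuclideanSpace ℝ (Fin n) => (((2 * Real.pi * ‖η‖) ^ α : ℝ) : ℂ)) ξ :=
        Complex.ofRealCLM.contDiff.contDiffAt.comp ξ h2
      exact h3.mul (hs.smooth').contDiffAt
  set gs := (FourierTransform.fourierCLE ℂ (SchwartzMap (EuclideanSpace ℝ (Fin n)) ℂ)).symm (toSchwartz mfun hmsmooth hmsupp) with hgsdef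
  have hfrac : fracLapFun α ⇑ψ = ⇑gs := by
    have h1 : ⇑gs = 𝓕⁻ ⇑(toSchwartz mfun hmsmooth hmsupp) :=
      SchwartzMap.fourierInv_coe _
    unfold fracLapFun
    rw [hFψ, h1]
    rfl
  have hRHS : eLpNorm (fracLapFun α ⇑ψ) (ENNReal.ofReal p) volume < ⊤ := by
    rw [hfrac]; exact schwartz_eLpNorm_lt_top gs hp
  -- ψ is bounded below near 0
  have hψcoe : ⇑ψ = 𝓕⁻ ⇑hs := SchwartzMap.fourierInv_coe hs
  have hb_pos : (0:ℝ) < ∫ x, b x := b.integral_pos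
  set A : ℝ := ∫ x, b x with hAdef
  have hA : 0 < A := hb_pos
  have hψ0 : (⇑ψ) 0 = ((A : ℝ) : ℂ) := by
    rw [hψcoe, Real.fourierInv_eq']
    simp only [inner_zero_right, mul_zero, Complex.ofReal_zero, zero_mul, Complex.exp_zero,
      one_smul]
    exact integral_ofReal
  have hψ0n : ‖(⇑ψ) 0‖ = A := by
    rw [hψ0, Complex.norm_real, Real.norm_eq_abs, abs_of_pos hA]
  obtain ⟨δ', hδ'pos, hδ'⟩ := Metric.continuousAt_iff.1
    ((ψ.continuous.norm).continuousAt (x := 0)) (A/2) (by positivity)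
  set δ : ℝ := min (δ'/2) 1 with hδdef
  have hδpos : 0 < δ := lt_min (by linarith) one_pos
  have hδ1 : δ ≤ 1 := min_le_right _ _
  have hlow : ∀ y : EuclideanSpace ℝ (Fin n), ‖y‖ ≤ δ → A/2 ≤ ‖(⇑ψ) y‖ := by
    intro y hy
    have hd : dist y 0 < δ' := by
      rw [dist_zero_right]
      have h1 : δ ≤ δ'/2 := min_le_left _ _
      linarith
    have h2 := hδ' hd
    rw [Real.dist_eq, hψ0n] at h2
    have h3 := abs_lt.1 h2
    linarith [h3.1]
  -- average bound
  set M : ℝ := ∫ x, ‖(⇑ψ) x‖ with hMdef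
  have hM0 : 0 ≤ M := integral_nonneg fun x => norm_nonneg _
  set v1 : ℝ := (volume (ball (0 : EuclideanSpace ℝ (Fin n)) 1)).toReal with hv1def
  have hv1 : 0 < v1 :=
    ENNReal.toReal_pos (measure_ball_pos volume 0 one_pos).ne' measure_ball_lt_top.ne
  have hballvol : ∀ (y : EuclideanSpace ℝ (Fin n)) (t : ℝ), 0 ≤ t →
      (volume (ball y t)).toReal = t ^ n * v1 := by
    intro y t ht
    rw [Measure.addHaar_ball volume y ht, ENNReal.toReal_mul, finrank_euclideanSpace_fin,
      ENNReal.toReal_ofReal (by positivity)]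
  have hVc : ∀ r : ℝ, 0 ≤ r → volume (closedBall (0 : EuclideanSpace ℝ (Fin n)) r) =
      ENNReal.ofReal (r ^ n * v1) := by
    intro r hr
    rw [Measure.addHaar_closedBall volume _ hr, finrank_euclideanSpace_fin,
      ENNReal.ofReal_mul (by positivity), hv1def,
      ENNReal.ofReal_toReal measure_ball_lt_top.ne]
  set T0 : ℝ := max 1 (4*M/(A*v1)) with hT0def
  have hT0_1 : (1:ℝ) ≤ T0 := le_max_left _ _
  have havg : ∀ (t : ℝ) (y : EuclideanSpace ℝ (Fin n)), T0 ≤ t →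
      ‖ballAvg (⇑ψ) t y‖ ≤ A/4 := by
    intro t y ht
    have ht1 : (1:ℝ) ≤ t := hT0_1.trans ht
    have ht0 : (0:ℝ) < t := by linarith
    have hM4 : 4*M/(A*v1) ≤ t := (le_max_right _ _).trans ht
    have h1 : ‖ballAvg (⇑ψ) t y‖ ≤ (volume (ball y t)).toReal⁻¹ * M :=
      norm_ballAvg_le (⇑ψ) ψ.integrable y
    rw [hballvol y t ht0.le] at h1
    refine h1.trans ?_
    have htn : t ≤ t ^ n := le_self_pow₀ ht1 hn.ne'
    have hq : (0:ℝ) < t ^ n * v1 := by positivity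
    rw [inv_mul_le_iff₀ hq]
    have h3 : 4*M ≤ A*v1*t := by
      have h4 := (div_le_iff₀ (by positivity : (0:ℝ) < A*v1)).1 hM4
      linarith
    nlinarith [mul_le_mul_of_nonneg_left htn (by positivity : (0:ℝ) ≤ A*v1/4)]
  -- key pointwise lower bound
  set R : ℝ := T0 with hRdef
  have hR1 : (1:ℝ) ≤ R := hT0_1
  have hR0 : (0:ℝ) < R := by linarith
  set W : ℝ := (A/4)^2 * (δ^n * v1) with hWdef
  have hW : 0 < W := by positivity
  set c1 : ℝ := W * 3 ^ (-(2*α + (n:ℝ) + 1)) with hc1def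
  have hc1 : 0 < c1 := by
    have : (0:ℝ) < (3:ℝ) ^ (-(2*α + (n:ℝ) + 1)) := Real.rpow_pos_of_pos (by norm_num) _
    positivity
  have key : ∀ x : EuclideanSpace ℝ (Fin n), R ≤ ‖x‖ →
      ENNReal.ofReal (c1 * ‖x‖ ^ (-(2*α + (n:ℝ)))) ^ ((1:ℝ)/2) ≤ lusinSa n α (⇑ψ) x := by
    intro x hRx
    have hx1 : (1:ℝ) ≤ ‖x‖ := hR1.trans hRx
    have hx0 : (0:ℝ) < ‖x‖ := by linarith
    unfold lusinSa
    apply ENNReal.rpow_le_rpow ?_ (by norm_num)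
    have step : ∀ t ∈ Set.Ioc (2*‖x‖) (3*‖x‖),
        ENNReal.ofReal (W * (3*‖x‖) ^ (-(2*α + (n:ℝ) + 1))) ≤
        (∫⁻ y in Metric.ball x t,
          (‖(ballAvg (⇑ψ) t y - (⇑ψ) y) / ((t ^ α : ℝ) : ℂ)‖₊ : ℝ≥0∞) ^ 2)
          / ENNReal.ofReal (t ^ (n + 1)) := by
      intro t ht
      obtain ⟨ht2, ht3⟩ := ht
      have ht0 : (0:ℝ) < t := lt_trans (by positivity) ht2
      have htT : T0 ≤ t := by
        have : R ≤ 2*‖x‖ := by linarith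
        rw [hRdef] at this
        linarith
      have htα : (0:ℝ) < t ^ α := Real.rpow_pos_of_pos ht0 α
      have hsub : closedBall (0 : EuclideanSpace ℝ (Fin n)) δ ⊆ Metric.ball x t := by
        intro y hy
        have hyn : ‖y‖ ≤ δ := by rwa [mem_closedBall, dist_zero_right] at hy
        rw [mem_ball, dist_eq_norm]
        calc ‖y - x‖ ≤ ‖y‖ + ‖x‖ := norm_sub_le _ _
          _ ≤ 1 + ‖x‖ := by linarith
          _ ≤ 2*‖x‖ := by linarith
          _ < t := ht2
      have hpt : ∀ y ∈ closedBall (0 : EuclideanSpace ℝ (Fin n)) δ,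
          ENNReal.ofReal ((A/4/t^α)^2) ≤
          (‖(ballAvg (⇑ψ) t y - (⇑ψ) y) / ((t ^ α : ℝ) : ℂ)‖₊ : ℝ≥0∞) ^ 2 := by
        intro y hy
        have hyn : ‖y‖ ≤ δ := by rwa [mem_closedBall, dist_zero_right] at hy
        have h1 := hlow y hyn
        have h2 := havg t y htT
        have h3 : A/4 ≤ ‖ballAvg (⇑ψ) t y - (⇑ψ) y‖ := by
          have h4 : ‖(⇑ψ) y‖ - ‖ballAvg (⇑ψ) t y‖ ≤ ‖(⇑ψ) y - ballAvg (⇑ψ) t y‖ :=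
            norm_sub_norm_le _ _
          rw [norm_sub_rev] at h4
          linarith
        have h5 : A/4/t^α ≤ ‖(ballAvg (⇑ψ) t y - (⇑ψ) y) / ((t ^ α : ℝ) : ℂ)‖ := by
          rw [norm_div, Complex.norm_real, Real.norm_eq_abs, abs_of_pos htα]
          gcongr
        calc ENNReal.ofReal ((A/4/t^α)^2)
            ≤ ENNReal.ofReal (‖(ballAvg (⇑ψ) t y - (⇑ψ) y) / ((t ^ α : ℝ) : ℂ)‖^2) :=
              ENNReal.ofReal_le_ofReal (pow_le_pow_left₀ (by positivity) h5 2)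
          _ = (‖(ballAvg (⇑ψ) t y - (⇑ψ) y) / ((t ^ α : ℝ) : ℂ)‖₊ : ℝ≥0∞) ^ 2 := by
              rw [← ENNReal.ofReal_coe_nnreal, coe_nnnorm, ← ENNReal.ofReal_pow (norm_nonneg _)]
      have e1 : (A/4/t^α)^2 * (δ^n*v1) / t^(n+1) = W * t ^ (-(2*α+(n:ℝ)+1)) := by
        have h2 : (t^α)^(2:ℕ) = t ^ (α*2) := by
          rw [← Real.rpow_natCast (t^α) 2, ← Real.rpow_mul ht0.le]
          norm_num
        have h3 : (t:ℝ)^(n+1 : ℕ) = t ^ ((n:ℝ)+1) := by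
          rw [← Real.rpow_natCast t (n+1)]
          push_cast
          ring_nf
        rw [div_pow, h2, h3, hWdef, div_mul_eq_mul_div, div_div, ← Real.rpow_add ht0,
          div_eq_mul_inv, ← Real.rpow_neg ht0.le,
          show -(α*2+((n:ℝ)+1)) = -(2*α+(n:ℝ)+1) by ring]
      have e2 : (3*‖x‖) ^ (-(2*α+(n:ℝ)+1)) ≤ t ^ (-(2*α+(n:ℝ)+1)) :=
        Real.rpow_le_rpow_of_nonpos ht0 ht3 (by linarith)
      calc ENNReal.ofReal (W * (3*‖x‖) ^ (-(2*α + (n:ℝ) + 1)))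
          ≤ ENNReal.ofReal ((A/4/t^α)^2 * (δ^n*v1) / t^(n+1)) := by
            apply ENNReal.ofReal_le_ofReal
            rw [e1]
            exact mul_le_mul_of_nonneg_left e2 hW.le
        _ = ENNReal.ofReal ((A/4/t^α)^2 * (δ^n*v1)) / ENNReal.ofReal (t^(n+1)) :=
            ENNReal.ofReal_div_of_pos (by positivity)
        _ = ENNReal.ofReal ((A/4/t^α)^2) *
              volume (closedBall (0 : EuclideanSpace ℝ (Fin n)) δ) / ENNReal.ofReal (t^(n+1)) := by
            rw [hVc δ hδpos.le, ← ENNReal.ofReal_mul (by positivity)]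
        _ = (∫⁻ _ in closedBall (0 : EuclideanSpace ℝ (Fin n)) δ,
              ENNReal.ofReal ((A/4/t^α)^2)) / ENNReal.ofReal (t^(n+1)) := by
            rw [setLIntegral_const]
        _ ≤ (∫⁻ y in closedBall (0 : EuclideanSpace ℝ (Fin n)) δ,
              (‖(ballAvg (⇑ψ) t y - (⇑ψ) y) / ((t ^ α : ℝ) : ℂ)‖₊ : ℝ≥0∞) ^ 2)
              / ENNReal.ofReal (t^(n+1)) :=
            ENNReal.div_le_div_right (setLIntegral_mono' measurableSet_closedBall hpt) _
        _ ≤ (∫⁻ y in Metric.ball x t,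
              (‖(ballAvg (⇑ψ) t y - (⇑ψ) y) / ((t ^ α : ℝ) : ℂ)‖₊ : ℝ≥0∞) ^ 2)
              / ENNReal.ofReal (t^(n+1)) :=
            ENNReal.div_le_div_right (lintegral_mono_set hsub) _
    calc ENNReal.ofReal (c1 * ‖x‖ ^ (-(2*α + (n:ℝ))))
        = ENNReal.ofReal (W * (3*‖x‖) ^ (-(2*α + (n:ℝ) + 1))) *
            volume (Set.Ioc (2*‖x‖) (3*‖x‖)) := by
          rw [Real.volume_Ioc, ← ENNReal.ofReal_mul (by positivity)]
          congr 1
          have hxe : ‖x‖ ^ (-(2*α+(n:ℝ))) = ‖x‖ ^ (-(2*α+(n:ℝ)+1)) * ‖x‖ := by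
            rw [← Real.rpow_add_one hx0.ne' (-(2*α+(n:ℝ)+1))]
            congr 1
            ring
          rw [Real.mul_rpow (by norm_num) hx0.le, hc1def, hxe,
            show (3:ℝ)*‖x‖ - 2*‖x‖ = ‖x‖ by ring]
          ring
      _ = ∫⁻ _ in Set.Ioc (2*‖x‖) (3*‖x‖),
            ENNReal.ofReal (W * (3*‖x‖) ^ (-(2*α + (n:ℝ) + 1))) := (setLIntegral_const _ _).symm
      _ ≤ ∫⁻ t in Set.Ioc (2*‖x‖) (3*‖x‖),
            (∫⁻ y in Metric.ball x t,
              (‖(ballAvg (⇑ψ) t y - (⇑ψ) y) / ((t ^ α : ℝ) : ℂ)‖₊ : ℝ≥0∞) ^ 2)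
              / ENNReal.ofReal (t ^ (n + 1)) := setLIntegral_mono' measurableSet_Ioc step
      _ ≤ ∫⁻ t in Set.Ioi (0:ℝ),
            (∫⁻ y in Metric.ball x t,
              (‖(ballAvg (⇑ψ) t y - (⇑ψ) y) / ((t ^ α : ℝ) : ℂ)‖₊ : ℝ≥0∞) ^ 2)
              / ENNReal.ofReal (t ^ (n + 1)) := by
          apply lintegral_mono_set
          intro t ht
          exact lt_trans (by positivity) ht.1
  -- raise to the power p
  set s : ℝ := (2*α+(n:ℝ)) * ((1/2)*p) with hsdef2
  have h2an : (0:ℝ) < 2*α+(n:ℝ) := by linarith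
  have hs_pos : 0 < s := by
    rw [hsdef2]; positivity
  have hsn : s < n := by
    have h5 := (lt_div_iff₀ h2an).1 hcon
    rw [hsdef2]
    nlinarith
  set c2 : ℝ := c1 ^ ((1/2)*p) with hc2def
  have hc2 : 0 < c2 := Real.rpow_pos_of_pos hc1 _
  have hSxp : ∀ x : EuclideanSpace ℝ (Fin n), R ≤ ‖x‖ →
      ENNReal.ofReal (c2 * ‖x‖ ^ (-s)) ≤ lusinSa n α (⇑ψ) x ^ p := by
    intro x hRx
    have hx0 : (0:ℝ) < ‖x‖ := lt_of_lt_of_le (by linarith) hRx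
    have h1 := key x hRx
    have h2 : (ENNReal.ofReal (c1 * ‖x‖ ^ (-(2*α+(n:ℝ)))) ^ ((1:ℝ)/2)) ^ p ≤
        lusinSa n α (⇑ψ) x ^ p := ENNReal.rpow_le_rpow h1 hp0.le
    refine le_trans (le_of_eq ?_) h2
    rw [← ENNReal.rpow_mul, ENNReal.ofReal_rpow_of_pos (by positivity)]
    congr 1
    rw [Real.mul_rpow hc1.le (Real.rpow_nonneg hx0.le _), ← Real.rpow_mul hx0.le,
      hc2def, hsdef2]
    congr 2
    ring
  have hdiv : ∫⁻ x, lusinSa n α (⇑ψ) x ^ p ∂volume = ⊤ :=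
    lintegral_div_top hn hv1 hVc hR0 hc2 hs_pos hsn hSxp
  -- conclusion
  have hLHS : lpNormE (lusinSa n α (⇑ψ)) p volume = ⊤ := by
    unfold lpNormE
    rw [hdiv]
    exact ENNReal.top_rpow_of_pos (by positivity)
  have hcontr := hbound ψ
  rw [hLHS, hfrac] at hcontr
  exact absurd (lt_of_le_of_lt hcontr (ENNReal.mul_lt_top ENNReal.ofReal_lt_top
    (schwartz_eLpNorm_lt_top gs hp))) (lt_irrefl _)
end
end
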